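/- Let p, q > 0 with p + q = 1, and let ρ1, ρ2 be n×n density matrices, with a_1 ≥ … ≥ a_n ≥ 0 the eigenvalues of ρ1. Then the maximum of tr(ρ1^p Φ(ρ2)^q) over all quantum channels Φ equals 1, and the minimum equals a_n^p; the same holds with tr|ρ1^p Φ(ρ2)^q| in place of tr(ρ1^p Φ(ρ2)^q). -/

import Mathlib

open Matrix
open scoped ComplexOrder Classical

/-- The vector of a tuple's entries sorted in decreasing (nonincreasing) order. -/
noncomputable def sortDec {n : ℕ} (x : Fin n → ℝ) : Fin n → ℝ :=
  fun i => x (Tuple.sort x i.rev)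

/-- The eigenvalues of a Hermitian matrix arranged in decreasing order,
`λ(A)`; junk value `0` if `A` is not Hermitian. -/
noncomputable def eigsDec {n : ℕ} (A : Matrix (Fin n) (Fin n) ℂ) : Fin n → ℝ :=
  if hA : A.IsHermitian then sortDec hA.eigenvalues else 0

/-- The eigenvalues of a Hermitian matrix arranged in increasing order. -/
noncomputable def eigsInc {n : ℕ} (A : Matrix (Fin n) (Fin n) ℂ) : Fin n → ℝ :=
  fun i => eigsDec A i.rev

/-- `Λ↓(A)`: the diagonal matrix of the eigenvalues of `A` in decreasing order. -/
noncomputable def LambdaDown {n : ℕ} (A : Matrix (Fin n) (Fin n) ℂ) :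
    Matrix (Fin n) (Fin n) ℂ :=
  Matrix.diagonal fun i => (eigsDec A i : ℂ)

/-- `Λ↑(A)`: the diagonal matrix of the eigenvalues of `A` in increasing order. -/
noncomputable def LambdaUp {n : ℕ} (A : Matrix (Fin n) (Fin n) ℂ) :
    Matrix (Fin n) (Fin n) ℂ :=
  Matrix.diagonal fun i => (eigsInc A i : ℂ)

/-- `x ≺ y`: the sum of the `k` largest entries of `x` is at most that of `y`
for every `k`, with equality of the total sums. -/
def Majorizes {n : ℕ} (x y : Fin n → ℝ) : Prop :=
  (∀ k : ℕ, ∑ i ∈ Finset.univ.filter (fun i : Fin n => (i : ℕ) < k), sortDec x i ≤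
      ∑ i ∈ Finset.univ.filter (fun i : Fin n => (i : ℕ) < k), sortDec y i) ∧
    (∑ i, x i) = ∑ i, y i

/-- A function `d` is Schur-convex if `x ≺ y` implies `d x ≤ d y`. -/
def SchurConvex {n : ℕ} (d : (Fin n → ℝ) → ℝ) : Prop :=
  ∀ x y : Fin n → ℝ, Majorizes x y → d x ≤ d y

/-- A density matrix: positive semidefinite with trace one. -/
def IsDensityMatrix {n : ℕ} (ρ : Matrix (Fin n) (Fin n) ℂ) : Prop :=
  ρ.PosSemidef ∧ ρ.trace = 1

/-- A quantum channel: completely positive trace preserving map in Kraus form. -/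
def IsQuantumChannel {n : ℕ}
    (Φ : Matrix (Fin n) (Fin n) ℂ → Matrix (Fin n) (Fin n) ℂ) : Prop :=
  ∃ (r : ℕ) (F : Fin r → Matrix (Fin n) (Fin n) ℂ),
    (∑ j, (F j)ᴴ * F j) = 1 ∧ ∀ X, Φ X = ∑ j, F j * X * (F j)ᴴ

/-- A unital quantum channel. -/
def IsUnitalChannel {n : ℕ}
    (Φ : Matrix (Fin n) (Fin n) ℂ → Matrix (Fin n) (Fin n) ℂ) : Prop :=
  IsQuantumChannel Φ ∧ Φ 1 = 1

/-- A mixed unitary channel: a convex combination of unitary conjugations. -/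
def IsMixedUnitaryChannel {n : ℕ}
    (Φ : Matrix (Fin n) (Fin n) ℂ → Matrix (Fin n) (Fin n) ℂ) : Prop :=
  ∃ (r : ℕ) (t : Fin r → ℝ) (U : Fin r → Matrix (Fin n) (Fin n) ℂ),
    (∀ j, 0 ≤ t j) ∧ (∑ j, t j) = 1 ∧
      (∀ j, U j ∈ Matrix.unitaryGroup (Fin n) ℂ) ∧
      ∀ X, Φ X = ∑ j, (t j : ℂ) • (U j * X * (U j)ᴴ)

/-- Functional calculus: `f(A)` for a Hermitian matrix `A`, via the spectral theorem;
junk value `0` if `A` is not Hermitian. -/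
noncomputable def matFun {n : ℕ} (f : ℝ → ℝ) (A : Matrix (Fin n) (Fin n) ℂ) :
    Matrix (Fin n) (Fin n) ℂ :=
  if hA : A.IsHermitian then
    (hA.eigenvectorUnitary : Matrix (Fin n) (Fin n) ℂ) *
      Matrix.diagonal (fun i => (f (hA.eigenvalues i) : ℂ)) *
      (hA.eigenvectorUnitary : Matrix (Fin n) (Fin n) ℂ)ᴴ
  else 0

/-- The positive semidefinite square root (as defined in Mathlib, Dec 2024). -/
noncomputable def Matrix.PosSemidef.sqrt {n : ℕ} {A : Matrix (Fin n) (Fin n) ℂ}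
    (hA : A.PosSemidef) : Matrix (Fin n) (Fin n) ℂ :=
  (hA.1.eigenvectorUnitary : Matrix (Fin n) (Fin n) ℂ) *
    Matrix.diagonal (fun i => ((Real.sqrt (hA.1.eigenvalues i) : ℝ) : ℂ)) *
    (star hA.1.eigenvectorUnitary : Matrix (Fin n) (Fin n) ℂ)

/-- `|A| = (AᴴA)^{1/2}`. -/
noncomputable def matAbs {n : ℕ} (A : Matrix (Fin n) (Fin n) ℂ) :
    Matrix (Fin n) (Fin n) ℂ :=
  (Matrix.posSemidef_conjTranspose_mul_self A).sqrt

/-- `tr|A|`, the sum of the singular values of `A`. -/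
noncomputable def traceAbs {n : ℕ} (A : Matrix (Fin n) (Fin n) ℂ) : ℝ :=
  ((matAbs A).trace).re

/-- The singular values of `A` in decreasing order. -/
noncomputable def singVals {n : ℕ} (A : Matrix (Fin n) (Fin n) ℂ) : Fin n → ℝ :=
  eigsDec (matAbs A)

/-- The positive semidefinite square root of a PSD matrix (junk value `0` otherwise). -/
noncomputable def matSqrt {n : ℕ} (A : Matrix (Fin n) (Fin n) ℂ) :
    Matrix (Fin n) (Fin n) ℂ :=
  if hA : A.PosSemidef then hA.sqrt else 0

/-- The fidelity `F(ρ,σ) = tr|ρ^{1/2} σ^{1/2}|`. -/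
noncomputable def fidelity {n : ℕ} (ρ σ : Matrix (Fin n) (Fin n) ℂ) : ℝ :=
  traceAbs (matSqrt ρ * matSqrt σ)

/-- The relative entropy `S(ρ‖σ) = tr(ρ (log ρ - log σ))`. -/
noncomputable def relEntropy {n : ℕ} (ρ σ : Matrix (Fin n) (Fin n) ℂ) : ℝ :=
  ((ρ * (matFun Real.log ρ - matFun Real.log σ)).trace).re

/-- The (real) trace of a matrix whose trace is real. -/
noncomputable def trR {n : ℕ} (A : Matrix (Fin n) (Fin n) ℂ) : ℝ := A.trace.re

noncomputable section Aux17

open Finset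

variable {n : ℕ}

/-- Cauchy–Schwarz for finite sums of complex numbers. -/
private lemma sum_cs {ι : Type*} [Fintype ι] (f g : ι → ℂ) :
    ‖∑ i, (starRingEnd ℂ) (f i) * g i‖ ≤
      Real.sqrt (∑ i, ‖f i‖ ^ 2) * Real.sqrt (∑ i, ‖g i‖ ^ 2) := by
  have h := @norm_inner_le_norm ℂ (EuclideanSpace ℂ ι) _ _ _ (WithLp.toLp 2 f) (WithLp.toLp 2 g)
  rw [EuclideanSpace.norm_eq, EuclideanSpace.norm_eq] at h
  simpa [PiLp.inner_apply, RCLike.inner_apply, mul_comm] using h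

private lemma conj_mul_self_re (z : ℂ) : ((starRingEnd ℂ) z * z) = (‖z‖ ^ 2 : ℝ) := by
  rw [mul_comm, Complex.mul_conj']; push_cast; ring

/-- Cauchy–Schwarz for the Frobenius inner product. -/
private lemma matrix_cs (A B : Matrix (Fin n) (Fin n) ℂ) :
    ‖(Aᴴ * B).trace‖ ≤
      Real.sqrt ((Aᴴ * A).trace.re) * Real.sqrt ((Bᴴ * B).trace.re) := by
  have e1 : (Aᴴ * B).trace
      = ∑ x : Fin n × Fin n, (starRingEnd ℂ) (A x.2 x.1) * B x.2 x.1 := by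
    rw [Fintype.sum_prod_type]
    simp [Matrix.trace, Matrix.diag, Matrix.mul_apply, Matrix.conjTranspose_apply]
  have e2 : ∀ C : Matrix (Fin n) (Fin n) ℂ,
      (Cᴴ * C).trace.re = ∑ x : Fin n × Fin n, ‖C x.2 x.1‖ ^ 2 := by
    intro C
    rw [Fintype.sum_prod_type]
    simp [Matrix.trace, Matrix.diag, Matrix.mul_apply, Matrix.conjTranspose_apply,
      Complex.re_sum, conj_mul_self_re]
    norm_num [← Complex.ofReal_pow]
  rw [e1, e2, e2]
  exact sum_cs _ _

private lemma psd_diag_re_nonneg {A : Matrix (Fin n) (Fin n) ℂ} (hA : A.PosSemidef)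
    (i : Fin n) : 0 ≤ (A i i).re := by
  have h := hA.diag_nonneg (i := i)
  simpa using (Complex.le_def.mp h).1

private lemma diag_re_le_one {C : Matrix (Fin n) (Fin n) ℂ}
    (h : ((1 : Matrix (Fin n) (Fin n) ℂ) - C).PosSemidef) (k : Fin n) : (C k k).re ≤ 1 := by
  have h0 := psd_diag_re_nonneg h k
  have e : ((1 : Matrix (Fin n) (Fin n) ℂ) - C) k k = 1 - C k k := by
    simp [Matrix.sub_apply, Matrix.one_apply_eq]
  rw [e] at h0
  simp only [Complex.sub_re, Complex.one_re] at h0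
  linarith

private lemma row_sum_norm {G : Matrix (Fin n) (Fin n) ℂ} (i : Fin n) :
    ∑ j, ‖G i j‖ ^ 2 = ((G * Gᴴ) i i).re := by
  simp [Matrix.mul_apply, Matrix.conjTranspose_apply, Complex.re_sum, Complex.mul_conj',
    ← Complex.ofReal_pow]

private lemma col_sum_norm {G : Matrix (Fin n) (Fin n) ℂ} (j : Fin n) :
    ∑ i, ‖G i j‖ ^ 2 = ((Gᴴ * G) j j).re := by
  simp [Matrix.mul_apply, Matrix.conjTranspose_apply, Complex.re_sum, conj_mul_self_re,
    ← Complex.ofReal_pow]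

private lemma row_sum_le {G : Matrix (Fin n) (Fin n) ℂ}
    (h : ((1 : Matrix (Fin n) (Fin n) ℂ) - G * Gᴴ).PosSemidef) (i : Fin n) :
    ∑ j, ‖G i j‖ ^ 2 ≤ 1 := by
  rw [row_sum_norm]; exact diag_re_le_one h i

private lemma col_sum_le {G : Matrix (Fin n) (Fin n) ℂ}
    (h : ((1 : Matrix (Fin n) (Fin n) ℂ) - Gᴴ * G).PosSemidef) (j : Fin n) :
    ∑ i, ‖G i j‖ ^ 2 ≤ 1 := by
  rw [col_sum_norm]; exact diag_re_le_one h j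

private lemma psd_one_sub_proj {B : Matrix (Fin n) (Fin n) ℂ}
    (hB : Bᴴ = B) (hBB : B * B = B) : ((1 : Matrix (Fin n) (Fin n) ℂ) - B).PosSemidef := by
  have key : ((1 : Matrix (Fin n) (Fin n) ℂ) - B)ᴴ * (1 - B) = 1 - B := by
    rw [Matrix.conjTranspose_sub, Matrix.conjTranspose_one, hB, Matrix.sub_mul,
      Matrix.mul_sub, Matrix.mul_sub, hBB, Matrix.one_mul, Matrix.mul_one]
    simp
  have := Matrix.posSemidef_conjTranspose_mul_self ((1 : Matrix (Fin n) (Fin n) ℂ) - B)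
  rwa [key] at this

private lemma trace_diagonal_mul (v : Fin n → ℂ) (C : Matrix (Fin n) (Fin n) ℂ) :
    (Matrix.diagonal v * C).trace = ∑ i, v i * C i i := by
  simp [Matrix.trace, Matrix.diag, Matrix.diagonal_mul]

/-- The fundamental trace formula. -/
private lemma trace_PDQ (P Q : Matrix (Fin n) (Fin n) ℂ) (α β : Fin n → ℝ) :
    ((P * Matrix.diagonal (fun i => (α i : ℂ)) * Pᴴ) *
      (Q * Matrix.diagonal (fun j => (β j : ℂ)) * Qᴴ)).trace.re
      = ∑ i, ∑ j, α i * β j * ‖(Pᴴ * Q) i j‖ ^ 2 := by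
  set G := Pᴴ * Q with hG
  have h1 : ((P * Matrix.diagonal (fun i => (α i : ℂ)) * Pᴴ) *
      (Q * Matrix.diagonal (fun j => (β j : ℂ)) * Qᴴ)).trace
      = (Matrix.diagonal (fun i => (α i : ℂ)) *
          (G * Matrix.diagonal (fun j => (β j : ℂ)) * Gᴴ)).trace := by
    have e1 : (P * Matrix.diagonal (fun i => (α i : ℂ)) * Pᴴ) *
        (Q * Matrix.diagonal (fun j => (β j : ℂ)) * Qᴴ)
        = (P * Matrix.diagonal (fun i => (α i : ℂ))) *
          (Pᴴ * (Q * Matrix.diagonal (fun j => (β j : ℂ)) * Qᴴ)) := by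
      simp only [Matrix.mul_assoc]
    rw [e1, Matrix.trace_mul_comm]
    have e2 : Pᴴ * (Q * Matrix.diagonal (fun j => (β j : ℂ)) * Qᴴ) *
        (P * Matrix.diagonal (fun i => (α i : ℂ)))
        = ((Pᴴ * Q) * Matrix.diagonal (fun j => (β j : ℂ)) * (Qᴴ * P)) *
          Matrix.diagonal (fun i => (α i : ℂ)) := by
      simp only [Matrix.mul_assoc]
    rw [e2, Matrix.trace_mul_comm]
    have e3 : (Qᴴ * P) = Gᴴ := by simp [hG, Matrix.conjTranspose_mul]
    rw [e3, hG]
  have h2 : ∀ i, (G * Matrix.diagonal (fun j => (β j : ℂ)) * Gᴴ) i i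
      = ∑ j, G i j * (β j : ℂ) * (starRingEnd ℂ) (G i j) := by
    intro i
    simp [Matrix.mul_apply, Matrix.conjTranspose_apply, Matrix.diagonal_apply, mul_ite,
      mul_zero, ite_mul, zero_mul, Finset.sum_ite_eq, Finset.sum_ite_eq']
  rw [h1, trace_diagonal_mul, Complex.re_sum]
  refine Finset.sum_congr rfl fun i _ => ?_
  rw [h2 i, Finset.mul_sum, Complex.re_sum]
  refine Finset.sum_congr rfl fun j _ => ?_
  have key : (α i : ℂ) * (G i j * (β j : ℂ) * (starRingEnd ℂ) (G i j))
      = ((α i * β j * ‖G i j‖ ^ 2 : ℝ) : ℂ) := by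
    have e : G i j * (starRingEnd ℂ) (G i j) = ((‖G i j‖ ^ 2 : ℝ) : ℂ) := by
      rw [Complex.mul_conj']; push_cast; ring
    calc (α i : ℂ) * (G i j * (β j : ℂ) * (starRingEnd ℂ) (G i j))
        = (α i : ℂ) * (β j : ℂ) * (G i j * (starRingEnd ℂ) (G i j)) := by ring
      _ = ((α i * β j * ‖G i j‖ ^ 2 : ℝ) : ℂ) := by rw [e]; push_cast; ring
  rw [key, Complex.ofReal_re]

private lemma key_bound {p q : ℝ} (hp : 0 < p) (hq : 0 < q) (hpq : p + q = 1)
    (a b : Fin n → ℝ) (c : Fin n → Fin n → ℝ)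
    (ha0 : ∀ i, 0 ≤ a i) (hb0 : ∀ j, 0 ≤ b j)
    (ha1 : ∑ i, a i ≤ 1) (hb1 : ∑ j, b j ≤ 1)
    (hc0 : ∀ i j, 0 ≤ c i j)
    (hrow : ∀ i, ∑ j, c i j ≤ 1) (hcol : ∀ j, ∑ i, c i j ≤ 1) :
    ∑ i, ∑ j, a i ^ p * b j ^ q * c i j ≤ 1 := by
  have step : ∀ i j, a i ^ p * b j ^ q * c i j ≤ p * (a i * c i j) + q * (b j * c i j) := by
    intro i j
    have h := Real.geom_mean_le_arith_mean2_weighted hp.le hq.le (ha0 i) (hb0 j) hpq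
    nlinarith [hc0 i j]
  calc ∑ i, ∑ j, a i ^ p * b j ^ q * c i j
      ≤ ∑ i, ∑ j, (p * (a i * c i j) + q * (b j * c i j)) := by
        refine Finset.sum_le_sum fun i _ => Finset.sum_le_sum fun j _ => step i j
    _ = p * ∑ i, a i * ∑ j, c i j + q * ∑ j, b j * ∑ i, c i j := by
        simp only [Finset.sum_add_distrib, ← Finset.mul_sum]
        congr 1
        rw [Finset.sum_comm]
        simp only [← Finset.mul_sum]
    _ ≤ p * ∑ i, a i * 1 + q * ∑ j, b j * 1 := by
        have h1 : ∑ i, a i * ∑ j, c i j ≤ ∑ i, a i * 1 :=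
          Finset.sum_le_sum fun i _ => mul_le_mul_of_nonneg_left (hrow i) (ha0 i)
        have h2 : ∑ j, b j * ∑ i, c i j ≤ ∑ j, b j * 1 :=
          Finset.sum_le_sum fun j _ => mul_le_mul_of_nonneg_left (hcol j) (hb0 j)
        have := mul_le_mul_of_nonneg_left h1 hp.le
        have := mul_le_mul_of_nonneg_left h2 hq.le
        linarith
    _ ≤ p * 1 + q * 1 := by
        simp only [mul_one]
        have := mul_le_mul_of_nonneg_left ha1 hp.le
        have := mul_le_mul_of_nonneg_left hb1 hq.le
        linarith
    _ = 1 := by rw [mul_one, mul_one, hpq]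

private lemma key_lower {p q : ℝ} (hp : 0 < p) (hq : 0 < q) (hpq : p + q = 1)
    (m : ℝ) (hm : 0 ≤ m) (a b : Fin n → ℝ) (c : Fin n → Fin n → ℝ)
    (hma : ∀ i, m ≤ a i) (hb0 : ∀ j, 0 ≤ b j) (hble : ∀ j, b j ≤ 1)
    (hbsum : ∑ j, b j = 1) (hc0 : ∀ i j, 0 ≤ c i j) (hcol : ∀ j, ∑ i, c i j = 1) :
    m ^ p ≤ ∑ i, ∑ j, a i ^ p * b j ^ q * c i j := by
  have hstep : ∀ i j, m ^ p * (b j * c i j) ≤ a i ^ p * b j ^ q * c i j := by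
    intro i j
    have hap : m ^ p ≤ a i ^ p := Real.rpow_le_rpow hm (hma i) hp.le
    have hbq : b j ≤ b j ^ q := by
      rcases eq_or_lt_of_le (hb0 j) with h | h
      · rw [← h, Real.zero_rpow hq.ne']
      · calc b j = b j ^ (1 : ℝ) := (Real.rpow_one _).symm
          _ ≤ b j ^ q := Real.rpow_le_rpow_of_exponent_ge h (hble j) (by linarith)
    have h1 : m ^ p * b j ≤ a i ^ p * b j ^ q :=
      mul_le_mul hap hbq (hb0 j) (Real.rpow_nonneg (hm.trans (hma i)) p)
    calc m ^ p * (b j * c i j) = (m ^ p * b j) * c i j := by ring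
      _ ≤ (a i ^ p * b j ^ q) * c i j := mul_le_mul_of_nonneg_right h1 (hc0 i j)
  have h2 : ∑ i, ∑ j, m ^ p * (b j * c i j) = m ^ p := by
    rw [Finset.sum_comm]
    have : ∀ j, ∑ i, m ^ p * (b j * c i j) = m ^ p * b j := by
      intro j
      rw [← Finset.mul_sum, ← Finset.mul_sum, hcol j, mul_one]
    rw [Finset.sum_congr rfl fun j _ => this j, ← Finset.mul_sum, hbsum, mul_one]
  calc m ^ p = ∑ i, ∑ j, m ^ p * (b j * c i j) := h2.symm
    _ ≤ ∑ i, ∑ j, a i ^ p * b j ^ q * c i j :=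
        Finset.sum_le_sum fun i _ => Finset.sum_le_sum fun j _ => hstep i j

/-! ### Unitary conjugation of diagonal matrices -/

private def conjU (U : Matrix.unitaryGroup (Fin n) ℂ) (v : Fin n → ℝ) :
    Matrix (Fin n) (Fin n) ℂ :=
  (U : Matrix (Fin n) (Fin n) ℂ) * Matrix.diagonal (fun i => (v i : ℂ)) *
    (U : Matrix (Fin n) (Fin n) ℂ)ᴴ

private lemma unitary_conj_mul_self (U : Matrix.unitaryGroup (Fin n) ℂ) :
    (U : Matrix (Fin n) (Fin n) ℂ)ᴴ * (U : Matrix (Fin n) (Fin n) ℂ) = 1 := by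
  rw [← Matrix.star_eq_conjTranspose]
  exact Matrix.UnitaryGroup.star_mul_self U

private lemma unitary_mul_conj_self (U : Matrix.unitaryGroup (Fin n) ℂ) :
    (U : Matrix (Fin n) (Fin n) ℂ) * (U : Matrix (Fin n) (Fin n) ℂ)ᴴ = 1 := by
  rw [← Matrix.star_eq_conjTranspose]
  exact Matrix.mem_unitaryGroup_iff.mp U.2

private lemma conjU_mul (U : Matrix.unitaryGroup (Fin n) ℂ) (v w : Fin n → ℝ) :
    conjU U v * conjU U w = conjU U (fun i => v i * w i) := by
  unfold conjU
  have cancel : ∀ X : Matrix (Fin n) (Fin n) ℂ,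
      (U : Matrix (Fin n) (Fin n) ℂ)ᴴ * ((U : Matrix (Fin n) (Fin n) ℂ) * X) = X := by
    intro X; rw [← Matrix.mul_assoc, unitary_conj_mul_self, Matrix.one_mul]
  simp only [Matrix.mul_assoc, cancel]
  rw [← Matrix.mul_assoc (Matrix.diagonal _) (Matrix.diagonal _), Matrix.diagonal_mul_diagonal]
  simp [Complex.ofReal_mul]

private lemma conjU_herm (U : Matrix.unitaryGroup (Fin n) ℂ) (v : Fin n → ℝ) :
    (conjU U v)ᴴ = conjU U v := by
  unfold conjU
  simp only [Matrix.conjTranspose_mul, Matrix.conjTranspose_conjTranspose,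
    Matrix.diagonal_conjTranspose]
  have : star (fun i => (v i : ℂ)) = fun i => (v i : ℂ) := by
    funext i; simp [Complex.conj_ofReal]
  rw [this, Matrix.mul_assoc]

private lemma conjU_trace (U : Matrix.unitaryGroup (Fin n) ℂ) (v : Fin n → ℝ) :
    (conjU U v).trace = ((∑ i, v i : ℝ) : ℂ) := by
  unfold conjU
  rw [Matrix.trace_mul_cycle, unitary_conj_mul_self, Matrix.one_mul, Matrix.trace_diagonal]
  push_cast
  rfl

private lemma conjU_psd (U : Matrix.unitaryGroup (Fin n) ℂ) (v : Fin n → ℝ)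
    (hv : ∀ i, 0 ≤ v i) : (conjU U v).PosSemidef := by
  have hd : (Matrix.diagonal (fun i => (v i : ℂ))).PosSemidef := by
    refine Matrix.posSemidef_diagonal_iff.mpr fun i => ?_
    rw [Complex.zero_le_real]
    exact hv i
  exact hd.mul_mul_conjTranspose_same (U : Matrix (Fin n) (Fin n) ℂ)

private lemma matFun_eq {A : Matrix (Fin n) (Fin n) ℂ} (hA : A.IsHermitian) (f : ℝ → ℝ) :
    matFun f A = conjU hA.eigenvectorUnitary (fun i => f (hA.eigenvalues i)) := by
  rw [matFun, dif_pos hA]; rfl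

private lemma spectral' {A : Matrix (Fin n) (Fin n) ℂ} (hA : A.IsHermitian) :
    A = conjU hA.eigenvectorUnitary hA.eigenvalues := by
  unfold conjU
  rw [← Matrix.star_eq_conjTranspose]
  exact hA.spectral_theorem

private lemma matFun_eq_self {A : Matrix (Fin n) (Fin n) ℂ} (hA : A.IsHermitian) (f : ℝ → ℝ)
    (hf : ∀ i, f (hA.eigenvalues i) = hA.eigenvalues i) : matFun f A = A := by
  rw [matFun_eq hA f]
  have : (fun i => f (hA.eigenvalues i)) = hA.eigenvalues := funext hf
  rw [this, ← spectral' hA]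

theorem Matrix.PosSemidef.posSemidef_sqrt {A : Matrix (Fin n) (Fin n) ℂ} (hA : A.PosSemidef) :
    hA.sqrt.PosSemidef :=
  conjU_psd hA.1.eigenvectorUnitary (fun i => Real.sqrt (hA.1.eigenvalues i))
    (fun i => Real.sqrt_nonneg _)

theorem Matrix.PosSemidef.sqrt_mul_self {A : Matrix (Fin n) (Fin n) ℂ} (hA : A.PosSemidef) :
    hA.sqrt * hA.sqrt = A := by
  show conjU hA.1.eigenvectorUnitary (fun i => Real.sqrt (hA.1.eigenvalues i)) *
    conjU hA.1.eigenvectorUnitary (fun i => Real.sqrt (hA.1.eigenvalues i)) = A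
  rw [conjU_mul]
  conv_rhs => rw [spectral' hA.1]
  congr 1
  funext i
  exact Real.mul_self_sqrt (hA.eigenvalues_nonneg i)

theorem Matrix.PosSemidef.sqrt_eq_cfc' {A : Matrix (Fin n) (Fin n) ℂ} (hA : A.PosSemidef) :
    hA.sqrt = cfc Real.sqrt A := by
  rw [hA.1.cfc_eq, Matrix.IsHermitian.cfc, Unitary.conjStarAlgAut_apply]
  rfl

theorem Matrix.PosSemidef.eq_sqrt_of_sq_eq {A B : Matrix (Fin n) (Fin n) ℂ} (hA : A.PosSemidef)
    (hB : B.PosSemidef) (h : A ^ 2 = B) : A = hB.sqrt := by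
  have hsa : IsSelfAdjoint A := hA.1
  rw [hB.sqrt_eq_cfc', ← h, ← cfc_pow_id (R := ℝ) A 2, ← cfc_comp Real.sqrt (fun x : ℝ => x ^ 2) A]
  conv_lhs => rw [← cfc_id' ℝ A]
  refine cfc_congr fun x hx => ?_
  rw [hA.1.spectrum_real_eq_range_eigenvalues] at hx
  obtain ⟨i, rfl⟩ := hx
  simp [Real.sqrt_sq (hA.eigenvalues_nonneg i)]

private lemma density_trace_eq_sum {ρ : Matrix (Fin n) (Fin n) ℂ} (hρ : ρ.IsHermitian) :
    ρ.trace = ((∑ i, hρ.eigenvalues i : ℝ) : ℂ) := by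
  conv_lhs => rw [spectral' hρ]
  rw [conjU_trace]

private lemma density_eig_sum {ρ : Matrix (Fin n) (Fin n) ℂ} (hρ : IsDensityMatrix ρ) :
    ∑ i, hρ.1.1.eigenvalues i = 1 := by
  have h := (density_trace_eq_sum hρ.1.1).symm.trans hρ.2
  exact_mod_cast h

private lemma trace_mul_psd_nonneg {A B : Matrix (Fin n) (Fin n) ℂ}
    (hA : A.PosSemidef) (hB : B.PosSemidef) : 0 ≤ (A * B).trace.re := by
  have hAh := hA.posSemidef_sqrt.1
  have hC : (hA.sqrt ᴴ * B * hA.sqrt).PosSemidef := hB.conjTranspose_mul_mul_same hA.sqrt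
  rw [hAh] at hC
  have e : (A * B).trace = (hA.sqrt * B * hA.sqrt).trace := by
    conv_lhs => rw [← hA.sqrt_mul_self]
    rw [Matrix.trace_mul_cycle, Matrix.trace_mul_cycle]
  rw [e, Matrix.trace, Complex.re_sum]
  exact Finset.sum_nonneg fun i _ => psd_diag_re_nonneg hC i

private lemma matAbs_psd (M : Matrix (Fin n) (Fin n) ℂ) : (matAbs M).PosSemidef :=
  (Matrix.posSemidef_conjTranspose_mul_self M).posSemidef_sqrt

private lemma matAbs_sq (M : Matrix (Fin n) (Fin n) ℂ) : matAbs M * matAbs M = Mᴴ * M :=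
  (Matrix.posSemidef_conjTranspose_mul_self M).sqrt_mul_self

private lemma matAbs_of_posSemidef {A : Matrix (Fin n) (Fin n) ℂ} (hA : A.PosSemidef) :
    matAbs A = A := by
  have h : A ^ 2 = Aᴴ * A := by rw [hA.1, pow_two]
  exact (hA.eq_sqrt_of_sq_eq (Matrix.posSemidef_conjTranspose_mul_self A) h).symm

/-- Polar decomposition (with a contraction). -/
private lemma polar (M : Matrix (Fin n) (Fin n) ℂ) :
    ∃ V : Matrix (Fin n) (Fin n) ℂ,
      ((1 : Matrix (Fin n) (Fin n) ℂ) - V * Vᴴ).PosSemidef ∧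
      ((1 : Matrix (Fin n) (Fin n) ℂ) - Vᴴ * V).PosSemidef ∧
      (matAbs M).trace = (V * M).trace ∧ M = Vᴴ * matAbs M := by
  have hS : (matAbs M).PosSemidef := matAbs_psd M
  have hSh : (matAbs M).IsHermitian := hS.1
  set d := hSh.eigenvalues with hd
  set W : Matrix (Fin n) (Fin n) ℂ := (hSh.eigenvectorUnitary : Matrix (Fin n) (Fin n) ℂ)
    with hWdef
  have hWW : Wᴴ * W = 1 := unitary_conj_mul_self _
  have hWW' : W * Wᴴ = 1 := unitary_mul_conj_self _
  have cancelW : ∀ X : Matrix (Fin n) (Fin n) ℂ, Wᴴ * (W * X) = X := by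
    intro X; rw [← Matrix.mul_assoc, hWW, Matrix.one_mul]
  have cancelW' : ∀ X : Matrix (Fin n) (Fin n) ℂ, W * (Wᴴ * X) = X := by
    intro X; rw [← Matrix.mul_assoc, hWW', Matrix.one_mul]
  have hSpec : matAbs M = W * Matrix.diagonal (fun k => (d k : ℂ)) * Wᴴ := spectral' hSh
  set e : Fin n → ℂ := fun k => (d k : ℂ) with he
  set pinv : Fin n → ℂ := fun k => if d k = 0 then 0 else (e k)⁻¹ with hpinv
  set ind : Fin n → ℂ := fun k => if d k = 0 then 0 else 1 with hind
  have hne : ∀ k, d k ≠ 0 → e k ≠ 0 := by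
    intro k h; simpa [he, Complex.ofReal_eq_zero] using h
  set N := M * W with hN
  set Dp := Matrix.diagonal pinv with hDp
  set U := N * Dp with hU
  set V := W * Uᴴ with hV
  -- star facts for the diagonal functions
  have hstar_pinv : star pinv = pinv := by
    funext k; by_cases h : d k = 0 <;>
      simp [hpinv, h, he, ← Complex.ofReal_inv, Complex.conj_ofReal]
  have hstar_ind : star ind = ind := by
    funext k; by_cases h : d k = 0 <;> simp [hind, h]
  have hNN : Nᴴ * N = Matrix.diagonal (fun k => e k * e k) := by
    have h1 : Nᴴ * N = Wᴴ * ((matAbs M * matAbs M) * W) := by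
      rw [matAbs_sq, hN]
      simp only [Matrix.conjTranspose_mul, Matrix.mul_assoc]
    rw [h1, hSpec]
    simp only [Matrix.mul_assoc, cancelW, cancelW']
    rw [← Matrix.mul_assoc (Matrix.diagonal _) (Matrix.diagonal _), Matrix.diagonal_mul_diagonal,
      ← Matrix.mul_assoc, Matrix.mul_assoc, hWW, Matrix.mul_one]
  -- pseudo-inverse facts
  have hUU : Uᴴ * U = Matrix.diagonal ind := by
    have h1 : Uᴴ * U = Dpᴴ * ((Nᴴ * N) * Dp) := by
      rw [hU]; simp only [Matrix.conjTranspose_mul, Matrix.mul_assoc]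
    rw [h1, hNN, hDp, Matrix.diagonal_conjTranspose, hstar_pinv,
      Matrix.diagonal_mul_diagonal, Matrix.diagonal_mul_diagonal]
    have hfun : (fun k => pinv k * (e k * e k * pinv k)) = ind := by
      funext k
      by_cases h : d k = 0
      · simp [hpinv, hind, h]
      · have := hne k h
        simp only [hpinv, hind, h, ↓reduceIte]
        field_simp
    rw [hfun]
  have hUN : Uᴴ * N = Matrix.diagonal e := by
    have h1 : Uᴴ * N = Dpᴴ * (Nᴴ * N) := by
      rw [hU]; simp only [Matrix.conjTranspose_mul, Matrix.mul_assoc]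
    rw [h1, hNN, hDp, Matrix.diagonal_conjTranspose, hstar_pinv, Matrix.diagonal_mul_diagonal]
    have hfun : (fun k => pinv k * (e k * e k)) = e := by
      funext k
      by_cases h : d k = 0
      · simp [hpinv, h, he]
      · have := hne k h
        simp only [hpinv, h, ↓reduceIte]
        field_simp
    rw [hfun]
  have hNind : N * Matrix.diagonal ind = N := by
    ext i k
    rw [Matrix.mul_diagonal]
    by_cases h : d k = 0
    · have hcol : ∑ i', ‖N i' k‖ ^ 2 = 0 := by
        rw [col_sum_norm, hNN]
        simp [Matrix.diagonal_apply_eq, he, h]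
      have : N i k = 0 := by
        have := (Finset.sum_eq_zero_iff_of_nonneg
          (fun i' _ => sq_nonneg ‖N i' k‖)).mp hcol i (Finset.mem_univ i)
        simpa using this
      simp [hind, h, this]
    · simp [hind, h]
  have hUind : U * Matrix.diagonal ind = U := by
    rw [hU, Matrix.mul_assoc, hDp, Matrix.diagonal_mul_diagonal]
    have hfun : (fun k => pinv k * ind k) = pinv := by
      funext k
      by_cases h : d k = 0 <;> simp [hpinv, hind, h]
    rw [hfun]
  -- the contraction V
  refine ⟨V, ?_, ?_, ?_, ?_⟩
  · -- 1 - V Vᴴ psd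
    have hVV : V * Vᴴ = W * Matrix.diagonal ind * Wᴴ := by
      rw [hV]
      simp only [Matrix.conjTranspose_mul, Matrix.conjTranspose_conjTranspose, Matrix.mul_assoc,
        cancelW]  -- V*Vᴴ = W * (Uᴴ * (U * Wᴴ))
      rw [← Matrix.mul_assoc (Uᴴ) U, hUU]
    refine psd_one_sub_proj ?_ ?_
    · rw [hVV]
      simp only [Matrix.conjTranspose_mul, Matrix.conjTranspose_conjTranspose,
        Matrix.diagonal_conjTranspose, hstar_ind]
      simp only [Matrix.mul_assoc]
    · rw [hVV]
      simp only [Matrix.mul_assoc, cancelW]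
      rw [← Matrix.mul_assoc (Matrix.diagonal ind) (Matrix.diagonal ind),
        Matrix.diagonal_mul_diagonal]
      have : (fun k => ind k * ind k) = ind := by
        funext k; by_cases h : d k = 0 <;> simp [hind, h]
      rw [this]
  · -- 1 - Vᴴ V psd
    have hVV' : Vᴴ * V = U * Uᴴ := by
      rw [hV]
      simp only [Matrix.conjTranspose_mul, Matrix.conjTranspose_conjTranspose, Matrix.mul_assoc,
        cancelW]
    refine psd_one_sub_proj ?_ ?_
    · rw [hVV']
      simp [Matrix.conjTranspose_mul, Matrix.conjTranspose_conjTranspose]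
    · rw [hVV']
      have h1 : U * Uᴴ * (U * Uᴴ) = U * (Uᴴ * U) * Uᴴ := by
        simp only [Matrix.mul_assoc]
      rw [h1, hUU, hUind]
  · -- traces
    have h1 : (matAbs M).trace = ∑ k, e k := by
      rw [hSpec, Matrix.trace_mul_cycle, hWW, Matrix.one_mul, Matrix.trace_diagonal]
    have h2 : (V * M).trace = ∑ k, e k := by
      rw [hV, Matrix.mul_assoc, Matrix.trace_mul_comm, Matrix.mul_assoc, ← hN, hUN,
        Matrix.trace_diagonal]
    rw [h1, h2]
  · -- M = Vᴴ (matAbs M)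
    have h1 : Vᴴ * matAbs M = U * (Matrix.diagonal e * Wᴴ) := by
      rw [hV, hSpec]
      simp only [Matrix.conjTranspose_mul, Matrix.conjTranspose_conjTranspose, Matrix.mul_assoc,
        cancelW]
    have h2 : U * Matrix.diagonal e = N := by
      rw [hU, Matrix.mul_assoc, hDp, Matrix.diagonal_mul_diagonal]
      have : (fun k => pinv k * e k) = ind := by
        funext k
        by_cases h : d k = 0
        · simp [hpinv, hind, h, he]
        · have := hne k h
          simp only [hpinv, hind, h, ↓reduceIte]
          field_simp
      rw [this, hNind]
    rw [h1, ← Matrix.mul_assoc, h2, hN, Matrix.mul_assoc, hWW', Matrix.mul_one]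

private lemma cancel_uc (U : Matrix.unitaryGroup (Fin n) ℂ) (X : Matrix (Fin n) (Fin n) ℂ) :
    (U : Matrix (Fin n) (Fin n) ℂ)ᴴ * ((U : Matrix (Fin n) (Fin n) ℂ) * X) = X := by
  rw [← Matrix.mul_assoc, unitary_conj_mul_self, Matrix.one_mul]

private lemma cancel_cu (U : Matrix.unitaryGroup (Fin n) ℂ) (X : Matrix (Fin n) (Fin n) ℂ) :
    (U : Matrix (Fin n) (Fin n) ℂ) * ((U : Matrix (Fin n) (Fin n) ℂ)ᴴ * X) = X := by
  rw [← Matrix.mul_assoc, unitary_mul_conj_self, Matrix.one_mul]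

/-- Central upper bound: `Re tr((V ρ^p Vᴴ) σ^q) ≤ 1` for contractions `V`. -/
private lemma core_ub {p q : ℝ} (hp : 0 < p) (hq : 0 < q) (hpq : p + q = 1)
    {ρ σ : Matrix (Fin n) (Fin n) ℂ} (hρ : IsDensityMatrix ρ) (hσ : IsDensityMatrix σ)
    (V : Matrix (Fin n) (Fin n) ℂ)
    (hV1 : ((1 : Matrix (Fin n) (Fin n) ℂ) - V * Vᴴ).PosSemidef)
    (hV2 : ((1 : Matrix (Fin n) (Fin n) ℂ) - Vᴴ * V).PosSemidef) :
    ((V * matFun (fun x => x ^ p) ρ * Vᴴ) * matFun (fun x => x ^ q) σ).trace.re ≤ 1 := by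
  have hρH := hρ.1.1
  have hσH := hσ.1.1
  have ha0 : ∀ i, 0 ≤ hρH.eigenvalues i := fun i => hρ.1.eigenvalues_nonneg i
  have hb0 : ∀ j, 0 ≤ hσH.eigenvalues j := fun j => hσ.1.eigenvalues_nonneg j
  rw [matFun_eq hρH, matFun_eq hσH]
  have hshape : V * conjU hρH.eigenvectorUnitary (fun i => hρH.eigenvalues i ^ p) * Vᴴ *
      conjU hσH.eigenvectorUnitary (fun j => hσH.eigenvalues j ^ q)
      = ((V * (hρH.eigenvectorUnitary : Matrix (Fin n) (Fin n) ℂ)) *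
          Matrix.diagonal (fun i => ((hρH.eigenvalues i ^ p : ℝ) : ℂ)) *
          (V * (hρH.eigenvectorUnitary : Matrix (Fin n) (Fin n) ℂ))ᴴ) *
        ((hσH.eigenvectorUnitary : Matrix (Fin n) (Fin n) ℂ) *
          Matrix.diagonal (fun j => ((hσH.eigenvalues j ^ q : ℝ) : ℂ)) *
          (hσH.eigenvectorUnitary : Matrix (Fin n) (Fin n) ℂ)ᴴ) := by
    unfold conjU
    simp only [Matrix.conjTranspose_mul, Matrix.mul_assoc]
  rw [hshape, trace_PDQ]
  have hGG : ((V * (hρH.eigenvectorUnitary : Matrix (Fin n) (Fin n) ℂ))ᴴ *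
        (hσH.eigenvectorUnitary : Matrix (Fin n) (Fin n) ℂ)) *
      ((V * (hρH.eigenvectorUnitary : Matrix (Fin n) (Fin n) ℂ))ᴴ *
        (hσH.eigenvectorUnitary : Matrix (Fin n) (Fin n) ℂ))ᴴ
      = (hρH.eigenvectorUnitary : Matrix (Fin n) (Fin n) ℂ)ᴴ * ((Vᴴ * V) *
        (hρH.eigenvectorUnitary : Matrix (Fin n) (Fin n) ℂ)) := by
    simp only [Matrix.conjTranspose_mul, Matrix.conjTranspose_conjTranspose,
      Matrix.mul_assoc, cancel_cu]
  have hGG' : ((V * (hρH.eigenvectorUnitary : Matrix (Fin n) (Fin n) ℂ))ᴴ *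
        (hσH.eigenvectorUnitary : Matrix (Fin n) (Fin n) ℂ))ᴴ *
      ((V * (hρH.eigenvectorUnitary : Matrix (Fin n) (Fin n) ℂ))ᴴ *
        (hσH.eigenvectorUnitary : Matrix (Fin n) (Fin n) ℂ))
      = (hσH.eigenvectorUnitary : Matrix (Fin n) (Fin n) ℂ)ᴴ * ((V * Vᴴ) *
        (hσH.eigenvectorUnitary : Matrix (Fin n) (Fin n) ℂ)) := by
    simp only [Matrix.conjTranspose_mul, Matrix.conjTranspose_conjTranspose,
      Matrix.mul_assoc, cancel_cu]
  have hrow : ∀ i, ∑ j, ‖(((V * (hρH.eigenvectorUnitary : Matrix (Fin n) (Fin n) ℂ))ᴴ *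
      (hσH.eigenvectorUnitary : Matrix (Fin n) (Fin n) ℂ)) i j)‖ ^ 2 ≤ 1 := by
    intro i
    refine row_sum_le ?_ i
    have key : (1 : Matrix (Fin n) (Fin n) ℂ) -
        ((V * (hρH.eigenvectorUnitary : Matrix (Fin n) (Fin n) ℂ))ᴴ *
          (hσH.eigenvectorUnitary : Matrix (Fin n) (Fin n) ℂ)) *
        ((V * (hρH.eigenvectorUnitary : Matrix (Fin n) (Fin n) ℂ))ᴴ *
          (hσH.eigenvectorUnitary : Matrix (Fin n) (Fin n) ℂ))ᴴ
        = (hρH.eigenvectorUnitary : Matrix (Fin n) (Fin n) ℂ)ᴴ *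
          ((1 : Matrix (Fin n) (Fin n) ℂ) - Vᴴ * V) *
          (hρH.eigenvectorUnitary : Matrix (Fin n) (Fin n) ℂ) := by
      rw [Matrix.mul_sub, Matrix.sub_mul, Matrix.mul_one, unitary_conj_mul_self, hGG]
      simp only [Matrix.mul_assoc]
    rw [key]
    exact hV2.conjTranspose_mul_mul_same _
  have hcol : ∀ j, ∑ i, ‖(((V * (hρH.eigenvectorUnitary : Matrix (Fin n) (Fin n) ℂ))ᴴ *
      (hσH.eigenvectorUnitary : Matrix (Fin n) (Fin n) ℂ)) i j)‖ ^ 2 ≤ 1 := by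
    intro j
    refine col_sum_le ?_ j
    have key : (1 : Matrix (Fin n) (Fin n) ℂ) -
        ((V * (hρH.eigenvectorUnitary : Matrix (Fin n) (Fin n) ℂ))ᴴ *
          (hσH.eigenvectorUnitary : Matrix (Fin n) (Fin n) ℂ))ᴴ *
        ((V * (hρH.eigenvectorUnitary : Matrix (Fin n) (Fin n) ℂ))ᴴ *
          (hσH.eigenvectorUnitary : Matrix (Fin n) (Fin n) ℂ))
        = (hσH.eigenvectorUnitary : Matrix (Fin n) (Fin n) ℂ)ᴴ *
          ((1 : Matrix (Fin n) (Fin n) ℂ) - V * Vᴴ) *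
          (hσH.eigenvectorUnitary : Matrix (Fin n) (Fin n) ℂ) := by
      rw [Matrix.mul_sub, Matrix.sub_mul, Matrix.mul_one, unitary_conj_mul_self, hGG']
      simp only [Matrix.mul_assoc]
    rw [key]
    exact hV1.conjTranspose_mul_mul_same _
  exact key_bound hp hq hpq _ _ _ ha0 hb0 (le_of_eq (density_eig_sum hρ))
    (le_of_eq (density_eig_sum hσ)) (fun i j => sq_nonneg _) hrow hcol

private lemma core_ub' {p q : ℝ} (hp : 0 < p) (hq : 0 < q) (hpq : p + q = 1)
    {ρ σ : Matrix (Fin n) (Fin n) ℂ} (hρ : IsDensityMatrix ρ) (hσ : IsDensityMatrix σ) :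
    (matFun (fun x => x ^ p) ρ * matFun (fun x => x ^ q) σ).trace.re ≤ 1 := by
  have h := core_ub hp hq hpq hρ hσ 1 (by simpa using Matrix.PosSemidef.zero)
    (by simpa using Matrix.PosSemidef.zero)
  simpa using h

/-- Central lower bound. -/
private lemma core_lb {p q : ℝ} (hp : 0 < p) (hq : 0 < q) (hpq : p + q = 1)
    {ρ σ : Matrix (Fin n) (Fin n) ℂ} (hρ : IsDensityMatrix ρ) (hσ : IsDensityMatrix σ)
    (m : ℝ) (hm0 : 0 ≤ m) (hma : ∀ i, m ≤ hρ.1.1.eigenvalues i) :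
    m ^ p ≤ (matFun (fun x => x ^ p) ρ * matFun (fun x => x ^ q) σ).trace.re := by
  have hρH := hρ.1.1
  have hσH := hσ.1.1
  have hb0 : ∀ j, 0 ≤ hσH.eigenvalues j := fun j => hσ.1.eigenvalues_nonneg j
  have hble : ∀ j, hσH.eigenvalues j ≤ 1 := by
    intro j
    calc hσH.eigenvalues j ≤ ∑ i, hσH.eigenvalues i :=
          Finset.single_le_sum (fun i _ => hb0 i) (Finset.mem_univ j)
      _ = 1 := density_eig_sum hσ
  rw [matFun_eq hρH, matFun_eq hσH]
  unfold conjU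
  rw [trace_PDQ]
  refine key_lower hp hq hpq m hm0 _ _ _ hma hb0 hble (density_eig_sum hσ)
    (fun i j => sq_nonneg _) ?_
  intro j
  have hGG : ((hρH.eigenvectorUnitary : Matrix (Fin n) (Fin n) ℂ)ᴴ *
      (hσH.eigenvectorUnitary : Matrix (Fin n) (Fin n) ℂ))ᴴ *
      ((hρH.eigenvectorUnitary : Matrix (Fin n) (Fin n) ℂ)ᴴ *
      (hσH.eigenvectorUnitary : Matrix (Fin n) (Fin n) ℂ)) = 1 := by
    simp only [Matrix.conjTranspose_mul, Matrix.conjTranspose_conjTranspose,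
      Matrix.mul_assoc, cancel_cu]
    exact unitary_conj_mul_self _
  rw [col_sum_norm, hGG]
  simp

/-- `Re tr M ≤ tr |M|`. -/
private lemma re_trace_le_traceAbs (M : Matrix (Fin n) (Fin n) ℂ) :
    M.trace.re ≤ traceAbs M := by
  obtain ⟨V, hV1, hV2, htr, hM⟩ := polar M
  have hS : (matAbs M).PosSemidef := matAbs_psd M
  set Sh := hS.sqrt with hShdef
  have hShH : Shᴴ = Sh := hS.posSemidef_sqrt.1
  have hSh2 : Sh * Sh = matAbs M := hS.sqrt_mul_self
  have h0 : 0 ≤ (matAbs M).trace.re := by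
    rw [Matrix.trace, Complex.re_sum]
    exact Finset.sum_nonneg fun i _ => psd_diag_re_nonneg hS i
  have e1 : M.trace = ((Sh * V)ᴴ * Sh).trace := by
    rw [hM, Matrix.conjTranspose_mul, hShH, ← hSh2]
    simp only [Matrix.mul_assoc]
  have e2 : ((Sh * V)ᴴ * (Sh * V)).trace.re ≤ (matAbs M).trace.re := by
    have e3 : ((Sh * V)ᴴ * (Sh * V)).trace = (matAbs M * (V * Vᴴ)).trace := by
      rw [Matrix.conjTranspose_mul, hShH]
      rw [show Vᴴ * Sh * (Sh * V) = Vᴴ * ((Sh * Sh) * V) by simp only [Matrix.mul_assoc],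
        hSh2, Matrix.trace_mul_comm, Matrix.mul_assoc]
    have e4 : 0 ≤ (matAbs M * ((1 : Matrix (Fin n) (Fin n) ℂ) - V * Vᴴ)).trace.re :=
      trace_mul_psd_nonneg hS hV1
    rw [Matrix.mul_sub, Matrix.mul_one, Matrix.trace_sub] at e4
    rw [e3]
    have := Complex.sub_re ((matAbs M).trace) ((matAbs M * (V * Vᴴ)).trace)
    simp only [Complex.sub_re] at e4
    linarith
  have e5 : ((Sh)ᴴ * Sh).trace = (matAbs M).trace := by rw [hShH, hSh2]
  calc M.trace.re ≤ ‖M.trace‖ := by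
        exact Complex.re_le_norm _
    _ = ‖(((Sh * V))ᴴ * Sh).trace‖ := by rw [e1]
    _ ≤ Real.sqrt (((Sh * V)ᴴ * (Sh * V)).trace.re) * Real.sqrt ((Shᴴ * Sh).trace.re) :=
        matrix_cs _ _
    _ ≤ Real.sqrt ((matAbs M).trace.re) * Real.sqrt ((matAbs M).trace.re) := by
        have g1 := Real.sqrt_le_sqrt e2
        have g2 : Real.sqrt ((Shᴴ * Sh).trace.re) = Real.sqrt ((matAbs M).trace.re) := by
          rw [e5]
        rw [g2]
        exact mul_le_mul_of_nonneg_right g1 (Real.sqrt_nonneg _)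
    _ = (matAbs M).trace.re := Real.mul_self_sqrt h0
    _ = traceAbs M := rfl

/-- Upper bound for the trace norm. -/
private lemma core_abs_ub {p q : ℝ} (hp : 0 < p) (hq : 0 < q) (hpq : p + q = 1)
    {ρ σ : Matrix (Fin n) (Fin n) ℂ} (hρ : IsDensityMatrix ρ) (hσ : IsDensityMatrix σ) :
    traceAbs (matFun (fun x => x ^ p) ρ * matFun (fun x => x ^ q) σ) ≤ 1 := by
  have hρH := hρ.1.1
  have hσH := hσ.1.1
  have ha0 : ∀ i, 0 ≤ hρH.eigenvalues i := fun i => hρ.1.eigenvalues_nonneg i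
  have hb0 : ∀ j, 0 ≤ hσH.eigenvalues j := fun j => hσ.1.eigenvalues_nonneg j
  obtain ⟨V, hV1, hV2, htr, hM⟩ := polar (matFun (fun x => x ^ p) ρ * matFun (fun x => x ^ q) σ)
  set X := matFun (fun x => x ^ p) ρ with hX
  set Y := matFun (fun x => x ^ q) σ with hY
  set Xh := conjU hρH.eigenvectorUnitary (fun i => hρH.eigenvalues i ^ (p / 2)) with hXh
  set Yh := conjU hσH.eigenvectorUnitary (fun j => hσH.eigenvalues j ^ (q / 2)) with hYh
  have hXhH : Xhᴴ = Xh := conjU_herm _ _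
  have hYhH : Yhᴴ = Yh := conjU_herm _ _
  have hXX : Xh * Xh = X := by
    rw [hXh, conjU_mul, hX, matFun_eq hρH]
    have hfun : (fun i => hρH.eigenvalues i ^ (p / 2) * hρH.eigenvalues i ^ (p / 2))
        = fun i => hρH.eigenvalues i ^ p := by
      funext i
      rw [← Real.rpow_of_add_eq (ha0 i) hp.ne' (by ring : p / 2 + p / 2 = p)]
    rw [hfun]
  have hYY : Yh * Yh = Y := by
    rw [hYh, conjU_mul, hY, matFun_eq hσH]
    have hfun : (fun j => hσH.eigenvalues j ^ (q / 2) * hσH.eigenvalues j ^ (q / 2))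
        = fun j => hσH.eigenvalues j ^ q := by
      funext j
      rw [← Real.rpow_of_add_eq (hb0 j) hq.ne' (by ring : q / 2 + q / 2 = q)]
    rw [hfun]
  -- Cauchy–Schwarz setup
  have e1 : ((Xh * Vᴴ * Yh)ᴴ * (Xh * Yh)).trace = (V * (X * Y)).trace := by
    have : (Xh * Vᴴ * Yh)ᴴ * (Xh * Yh) = Yh * (V * (Xh * (Xh * Yh))) := by
      simp only [Matrix.conjTranspose_mul, Matrix.conjTranspose_conjTranspose, hXhH, hYhH,
        Matrix.mul_assoc]
    rw [this, Matrix.trace_mul_comm]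
    rw [show V * (Xh * (Xh * Yh)) * Yh = V * ((Xh * Xh) * (Yh * Yh)) by
      simp only [Matrix.mul_assoc], hXX, hYY]
  have e2 : ((Xh * Vᴴ * Yh)ᴴ * (Xh * Vᴴ * Yh)).trace = ((V * X * Vᴴ) * Y).trace := by
    have : (Xh * Vᴴ * Yh)ᴴ * (Xh * Vᴴ * Yh) = Yh * (V * (Xh * (Xh * (Vᴴ * Yh)))) := by
      simp only [Matrix.conjTranspose_mul, Matrix.conjTranspose_conjTranspose, hXhH, hYhH,
        Matrix.mul_assoc]
    rw [this, Matrix.trace_mul_comm]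
    rw [show V * (Xh * (Xh * (Vᴴ * Yh))) * Yh = V * ((Xh * Xh) * (Vᴴ * (Yh * Yh))) by
      simp only [Matrix.mul_assoc], hXX, hYY]
    simp only [Matrix.mul_assoc]
  have e3 : ((Xh * Yh)ᴴ * (Xh * Yh)).trace = (X * Y).trace := by
    have : (Xh * Yh)ᴴ * (Xh * Yh) = Yh * (Xh * (Xh * Yh)) := by
      simp only [Matrix.conjTranspose_mul, Matrix.conjTranspose_conjTranspose, hXhH, hYhH,
        Matrix.mul_assoc]
    rw [this, Matrix.trace_mul_comm]
    rw [show Xh * (Xh * Yh) * Yh = (Xh * Xh) * (Yh * Yh) by simp only [Matrix.mul_assoc],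
      hXX, hYY]
  have b2 : ((V * X * Vᴴ) * Y).trace.re ≤ 1 := core_ub hp hq hpq hρ hσ V hV1 hV2
  have b3 : ((X * Y)).trace.re ≤ 1 := core_ub' hp hq hpq hρ hσ
  calc traceAbs (X * Y) = ((matAbs (X * Y)).trace).re := rfl
    _ = ((V * (X * Y)).trace).re := by rw [htr]
    _ ≤ ‖(V * (X * Y)).trace‖ := by exact Complex.re_le_norm _
    _ = ‖((Xh * Vᴴ * Yh)ᴴ * (Xh * Yh)).trace‖ := by rw [e1]
    _ ≤ Real.sqrt (((Xh * Vᴴ * Yh)ᴴ * (Xh * Vᴴ * Yh)).trace.re) *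
        Real.sqrt (((Xh * Yh)ᴴ * (Xh * Yh)).trace.re) := matrix_cs _ _
    _ ≤ 1 * 1 := by
        have s1 : Real.sqrt (((Xh * Vᴴ * Yh)ᴴ * (Xh * Vᴴ * Yh)).trace.re) ≤ 1 := by
          rw [Real.sqrt_le_one, e2]; exact b2
        have s2 : Real.sqrt (((Xh * Yh)ᴴ * (Xh * Yh)).trace.re) ≤ 1 := by
          rw [Real.sqrt_le_one, e3]; exact b3
        exact mul_le_mul s1 s2 (Real.sqrt_nonneg _) (by norm_num)
    _ = 1 := by norm_num

set_option maxHeartbeats 1600000 in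
/-- Quantum channels map density matrices to density matrices. -/
private lemma channel_density {Φ : Matrix (Fin n) (Fin n) ℂ → Matrix (Fin n) (Fin n) ℂ}
    (hΦ : IsQuantumChannel Φ) {ρ : Matrix (Fin n) (Fin n) ℂ} (hρ : IsDensityMatrix ρ) :
    IsDensityMatrix (Φ ρ) := by
  obtain ⟨r, F, hF1, hF2⟩ := hΦ
  constructor
  · rw [hF2]
    apply Finset.sum_induction _ Matrix.PosSemidef (fun A B hA hB => hA.add hB) Matrix.PosSemidef.zero
    intro j _
    exact hρ.1.mul_mul_conjTranspose_same (F j)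
  · rw [hF2, Matrix.trace_sum]
    have e : ∀ j, (F j * ρ * (F j)ᴴ).trace = ((F j)ᴴ * F j * ρ).trace := by
      intro j
      rw [Matrix.trace_mul_cycle]
    rw [Finset.sum_congr rfl fun j _ => e j, ← Matrix.trace_sum, ← Finset.sum_mul, hF1,
      Matrix.one_mul, hρ.2]

set_option maxHeartbeats 1600000 in
/-- Sandwiching a matrix between standard basis matrices. -/
private lemma std_sandwich (τ : Matrix (Fin n) (Fin n) ℂ) (a b c d : Fin n) :
    Matrix.single a b 1 * τ * Matrix.single c d 1
      = τ b c • Matrix.single a d 1 := by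
  conv_lhs => rw [matrix_eq_sum_single τ]
  simp only [Matrix.mul_sum, Matrix.sum_mul]
  have hterm : ∀ x y : Fin n,
      Matrix.single a b (1:ℂ) * Matrix.single x y (τ x y) *
        Matrix.single c d 1
      = if x = b then (if y = c then τ b c • Matrix.single a d 1 else 0) else 0 := by
    intro x y
    by_cases hx : x = b
    · subst hx
      rw [Matrix.single_mul_single_same]
      by_cases hy : y = c
      · subst hy
        rw [Matrix.single_mul_single_same]
        simp
      · rw [Matrix.single_mul_single_of_ne (h := hy)]
        simp [hy]
    · rw [Matrix.single_mul_single_of_ne (h := Ne.symm hx), Matrix.zero_mul]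
      simp [hx]
  calc ∑ x : Fin n, ∑ y : Fin n, Matrix.single a b (1:ℂ) *
        Matrix.single x y (τ x y) * Matrix.single c d 1
      = ∑ x : Fin n, ∑ y : Fin n, (if x = b then
          (if y = c then τ b c • Matrix.single a d 1 else 0) else 0) := by
        exact Finset.sum_congr rfl fun x _ => Finset.sum_congr rfl fun y _ => hterm x y
    _ = τ b c • Matrix.single a d 1 := by
        simp [Finset.sum_ite_eq', Finset.sum_ite_eq]

private lemma sum_std_diag : ∑ k : Fin n, Matrix.single k k (1:ℂ) = 1 := by
  ext i j
  rw [Matrix.sum_apply]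
  by_cases h : i = j
  · subst h
    simp [Matrix.single, Matrix.one_apply, Finset.sum_ite_eq]
  · have hz : ∀ x : Fin n, Matrix.single x x (1:ℂ) i j = 0 := by
      intro x
      apply Matrix.single_apply_of_ne
      rintro ⟨rfl, h2⟩
      exact h h2
    rw [Finset.sum_congr rfl fun x _ => hz x]
    simp [Matrix.one_apply_ne h]

/-- The completely depolarizing channel onto a fixed density matrix `τ`. -/
private lemma depolarizing_isChannel {τ : Matrix (Fin n) (Fin n) ℂ} (hτ : IsDensityMatrix τ) :
    IsQuantumChannel (fun X : Matrix (Fin n) (Fin n) ℂ => X.trace • τ) := by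
  classical
  set R := hτ.1.sqrt with hR
  have hRH : Rᴴ = R := hτ.1.posSemidef_sqrt.1
  have hRR : R * R = τ := hτ.1.sqrt_mul_self
  set K : Fin n × Fin n → Matrix (Fin n) (Fin n) ℂ :=
    fun jk => R * Matrix.single jk.1 jk.2 1 with hK
  have hE : ∀ a b : Fin n, (Matrix.single a b (1:ℂ))ᴴ = Matrix.single b a 1 := by
    intro a b
    ext i j
    simp [Matrix.single, Matrix.conjTranspose_apply, and_comm]
  refine ⟨n * n, fun m => K (finProdFinEquiv.symm m), ?_, ?_⟩
  · rw [Equiv.sum_comp finProdFinEquiv.symm (fun jk => (K jk)ᴴ * K jk)]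
    have e1 : ∀ jk : Fin n × Fin n, (K jk)ᴴ * K jk
        = τ jk.1 jk.1 • Matrix.single jk.2 jk.2 1 := by
      intro jk
      rw [hK]
      simp only [Matrix.conjTranspose_mul, hRH, hE]
      have : Matrix.single jk.2 jk.1 (1:ℂ) * R * (R * Matrix.single jk.1 jk.2 1)
          = Matrix.single jk.2 jk.1 1 * τ * Matrix.single jk.1 jk.2 1 := by
        rw [← hRR]
        simp only [Matrix.mul_assoc]
      rw [this, std_sandwich]
    rw [Finset.sum_congr rfl fun jk _ => e1 jk, Fintype.sum_prod_type]
    have e3 : ∀ j : Fin n, ∑ k : Fin n, τ j j • Matrix.single k k (1:ℂ)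
        = τ j j • (1 : Matrix (Fin n) (Fin n) ℂ) := by
      intro j
      rw [← Finset.smul_sum, sum_std_diag]
    rw [Finset.sum_congr rfl fun j _ => e3 j, ← Finset.sum_smul]
    have : ∑ j : Fin n, τ j j = 1 := hτ.2
    rw [this, one_smul]
  · intro X
    rw [Equiv.sum_comp finProdFinEquiv.symm (fun jk => K jk * X * (K jk)ᴴ)]
    have e1 : ∀ jk : Fin n × Fin n, K jk * X * (K jk)ᴴ
        = X jk.2 jk.2 • (R * Matrix.single jk.1 jk.1 1 * R) := by
      intro jk
      rw [hK]
      simp only [Matrix.conjTranspose_mul, hRH, hE]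
      have : R * Matrix.single jk.1 jk.2 1 * X *
          (Matrix.single jk.2 jk.1 1 * R)
          = R * (Matrix.single jk.1 jk.2 1 * X * Matrix.single jk.2 jk.1 1) * R
          := by simp only [Matrix.mul_assoc]
      rw [this, std_sandwich]
      rw [Matrix.mul_smul, Matrix.smul_mul]
    rw [Finset.sum_congr rfl fun jk _ => e1 jk, Fintype.sum_prod_type]
    have e2 : ∀ j : Fin n, ∑ k : Fin n, X k k • (R * Matrix.single j j 1 * R)
        = X.trace • (R * Matrix.single j j 1 * R) := by
      intro j
      rw [← Finset.sum_smul]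
      rfl
    rw [Finset.sum_congr rfl fun j _ => e2 j]
    have e3 : ∑ j : Fin n, X.trace • (R * Matrix.single j j 1 * R)
        = X.trace • (R * (∑ j : Fin n, Matrix.single j j 1) * R) := by
      rw [← Finset.smul_sum]
      congr 1
      rw [Matrix.mul_sum, Matrix.sum_mul]
    rw [e3, sum_std_diag, Matrix.mul_one, hRR]

/-- Eigenvalues of a Hermitian idempotent are `0` or `1`. -/
private lemma eig_01 {A : Matrix (Fin n) (Fin n) ℂ} (hA : A.IsHermitian) (hidem : A * A = A)
    (i : Fin n) : hA.eigenvalues i = 0 ∨ hA.eigenvalues i = 1 := by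
  have hv := hA.mulVec_eigenvectorBasis i
  have hv2 : (A * A) *ᵥ ⇑(hA.eigenvectorBasis i)
      = (hA.eigenvalues i * hA.eigenvalues i) • ⇑(hA.eigenvectorBasis i) := by
    rw [← Matrix.mulVec_mulVec, hv, Matrix.mulVec_smul, hv, smul_smul]
  rw [hidem, hv] at hv2
  have hne : ⇑(hA.eigenvectorBasis i) ≠ 0 := by
    have h := hA.eigenvectorBasis.orthonormal.ne_zero i
    intro hc
    exact h (by simpa using congrArg (WithLp.toLp 2) hc)
  have hsub : (hA.eigenvalues i * hA.eigenvalues i - hA.eigenvalues i) •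
      ⇑(hA.eigenvectorBasis i) = 0 := by
    rw [sub_smul, hv2, sub_self]
  rcases smul_eq_zero.mp hsub with h | h
  · have h3 : hA.eigenvalues i * (hA.eigenvalues i - 1) = 0 := by ring_nf; linarith
    rcases mul_eq_zero.mp h3 with h4 | h4
    · exact Or.inl h4
    · exact Or.inr (by linarith)
  · exact absurd h hne

end Aux17

set_option maxHeartbeats 1000000 in
/-- For `p, q > 0` with `p + q = 1`, the maximum of `tr(ρ1^p Φ(ρ2)^q)` over
all quantum channels is `1` and the minimum is `a_n^p` (`a_n` the smallest eigenvalue of `ρ1`);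
the same holds for `tr|ρ1^p Φ(ρ2)^q|`. -/
theorem stmt_17 {n : ℕ} (hn : 0 < n) (p q : ℝ) (hp : 0 < p) (hq : 0 < q) (hpq : p + q = 1)
    (ρ1 ρ2 : Matrix (Fin n) (Fin n) ℂ)
    (h1 : IsDensityMatrix ρ1) (h2 : IsDensityMatrix ρ2) :
    (∀ Φ, IsQuantumChannel Φ →
        trR (matFun (fun x => x ^ p) ρ1 * matFun (fun x => x ^ q) (Φ ρ2)) ≤ 1) ∧
      (∃ Φ, IsQuantumChannel Φ ∧
        trR (matFun (fun x => x ^ p) ρ1 * matFun (fun x => x ^ q) (Φ ρ2)) = 1) ∧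
      (∀ Φ, IsQuantumChannel Φ →
        (eigsDec ρ1 ⟨n - 1, by omega⟩) ^ p ≤
          trR (matFun (fun x => x ^ p) ρ1 * matFun (fun x => x ^ q) (Φ ρ2))) ∧
      (∃ Φ, IsQuantumChannel Φ ∧
        trR (matFun (fun x => x ^ p) ρ1 * matFun (fun x => x ^ q) (Φ ρ2)) =
          (eigsDec ρ1 ⟨n - 1, by omega⟩) ^ p) ∧
      (∀ Φ, IsQuantumChannel Φ →
        traceAbs (matFun (fun x => x ^ p) ρ1 * matFun (fun x => x ^ q) (Φ ρ2)) ≤ 1) ∧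
      (∃ Φ, IsQuantumChannel Φ ∧
        traceAbs (matFun (fun x => x ^ p) ρ1 * matFun (fun x => x ^ q) (Φ ρ2)) = 1) ∧
      (∀ Φ, IsQuantumChannel Φ →
        (eigsDec ρ1 ⟨n - 1, by omega⟩) ^ p ≤
          traceAbs (matFun (fun x => x ^ p) ρ1 * matFun (fun x => x ^ q) (Φ ρ2))) ∧
      ∃ Φ, IsQuantumChannel Φ ∧
        traceAbs (matFun (fun x => x ^ p) ρ1 * matFun (fun x => x ^ q) (Φ ρ2)) =
          (eigsDec ρ1 ⟨n - 1, by omega⟩) ^ p := by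
  have hρH : ρ1.IsHermitian := h1.1.1
  have ha0 : ∀ i, 0 ≤ hρH.eigenvalues i := fun i => h1.1.eigenvalues_nonneg i
  set i0 : Fin n := Tuple.sort hρH.eigenvalues ⟨0, hn⟩ with hi0
  have hm_eq : ∀ h : n - 1 < n, eigsDec ρ1 ⟨n - 1, h⟩ = hρH.eigenvalues i0 := by
    intro h
    have hrev : (⟨n - 1, h⟩ : Fin n).rev = ⟨0, hn⟩ := by
      ext
      simp only [Fin.rev]
      omega
    rw [eigsDec, dif_pos hρH, sortDec, hrev]
  have hma : ∀ i, hρH.eigenvalues i0 ≤ hρH.eigenvalues i := by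
    intro i
    have hmono := Tuple.monotone_sort hρH.eigenvalues
    have hle : (⟨0, hn⟩ : Fin n) ≤ (Tuple.sort hρH.eigenvalues).symm i := by
      simp [Fin.le_def]
    have := hmono hle
    simpa [hi0] using this
  have hm0 : 0 ≤ hρH.eigenvalues i0 := ha0 i0
  -- the max channel
  have hmaxchan : IsQuantumChannel (fun X : Matrix (Fin n) (Fin n) ℂ => X.trace • ρ1) :=
    depolarizing_isChannel h1
  have hMρ : matFun (fun x => x ^ p) ρ1 * matFun (fun x => x ^ q) ρ1 = ρ1 := by
    rw [matFun_eq hρH, matFun_eq hρH, conjU_mul]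
    have hfun : (fun i => hρH.eigenvalues i ^ p * hρH.eigenvalues i ^ q) = hρH.eigenvalues := by
      funext i
      rw [← Real.rpow_of_add_eq (ha0 i) one_ne_zero hpq, Real.rpow_one]
    rw [hfun, ← spectral' hρH]
  -- the min channel
  set δ : Fin n → ℝ := fun k => if k = i0 then 1 else 0 with hδ
  set P : Matrix (Fin n) (Fin n) ℂ := conjU hρH.eigenvectorUnitary δ with hP
  have hδ0 : ∀ k, 0 ≤ δ k := by
    intro k
    by_cases h : k = i0 <;> simp [hδ, h]
  have hPpsd : P.PosSemidef := conjU_psd _ _ hδ0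
  have hPdens : IsDensityMatrix P := by
    refine ⟨hPpsd, ?_⟩
    rw [hP, conjU_trace]
    have : ∑ k, δ k = 1 := by
      rw [hδ]
      simp
    rw [this]
    norm_num
  have hminchan : IsQuantumChannel (fun X : Matrix (Fin n) (Fin n) ℂ => X.trace • P) :=
    depolarizing_isChannel hPdens
  have hPP : P * P = P := by
    rw [hP, conjU_mul]
    have hfun : (fun i => δ i * δ i) = δ := by
      funext k
      by_cases h : k = i0 <;> simp [hδ, h]
    rw [hfun]
  have hmatFunP : matFun (fun x => x ^ q) P = P := by
    refine matFun_eq_self hPpsd.1 _ fun i => ?_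
    rcases eig_01 hPpsd.1 hPP i with h | h
    · rw [h, Real.zero_rpow hq.ne']
    · rw [h, Real.one_rpow]
  have hXP : matFun (fun x => x ^ p) ρ1 * P
      = conjU hρH.eigenvectorUnitary (fun i => hρH.eigenvalues i ^ p * δ i) := by
    rw [matFun_eq hρH, hP, conjU_mul]
  have hXPpsd : (matFun (fun x => x ^ p) ρ1 * P).PosSemidef := by
    rw [hXP]
    refine conjU_psd _ _ fun i => ?_
    exact mul_nonneg (Real.rpow_nonneg (ha0 i) p) (hδ0 i)
  have hXPtr : (matFun (fun x => x ^ p) ρ1 * P).trace.re = hρH.eigenvalues i0 ^ p := by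
    rw [hXP, conjU_trace, Complex.ofReal_re]
    rw [hδ]
    simp
  refine ⟨?_, ?_, ?_, ?_, ?_, ?_, ?_, ?_⟩
  · -- max bound for trR
    intro Φ hΦ
    exact core_ub' hp hq hpq h1 (channel_density hΦ h2)
  · -- max attained for trR
    refine ⟨fun X => X.trace • ρ1, hmaxchan, ?_⟩
    show trR (matFun (fun x => x ^ p) ρ1 * matFun (fun x => x ^ q) (ρ2.trace • ρ1)) = 1
    rw [h2.2, one_smul]
    show (matFun (fun x => x ^ p) ρ1 * matFun (fun x => x ^ q) ρ1).trace.re = 1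
    rw [hMρ, h1.2]
    norm_num
  · -- min bound for trR
    intro Φ hΦ
    rw [hm_eq]
    exact core_lb hp hq hpq h1 (channel_density hΦ h2) _ hm0 hma
  · -- min attained for trR
    refine ⟨fun X => X.trace • P, hminchan, ?_⟩
    rw [hm_eq]
    show trR (matFun (fun x => x ^ p) ρ1 * matFun (fun x => x ^ q) (ρ2.trace • P))
      = hρH.eigenvalues i0 ^ p
    rw [h2.2, one_smul, hmatFunP]
    exact hXPtr
  · -- max bound for traceAbs
    intro Φ hΦ
    exact core_abs_ub hp hq hpq h1 (channel_density hΦ h2)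
  · -- max attained for traceAbs
    refine ⟨fun X => X.trace • ρ1, hmaxchan, ?_⟩
    show traceAbs (matFun (fun x => x ^ p) ρ1 * matFun (fun x => x ^ q) (ρ2.trace • ρ1)) = 1
    rw [h2.2, one_smul]
    show traceAbs (matFun (fun x => x ^ p) ρ1 * matFun (fun x => x ^ q) ρ1) = 1
    rw [hMρ]
    show (matAbs ρ1).trace.re = 1
    rw [matAbs_of_posSemidef h1.1, h1.2]
    norm_num
  · -- min bound for traceAbs
    intro Φ hΦ
    rw [hm_eq]
    calc hρH.eigenvalues i0 ^ p
        ≤ trR (matFun (fun x => x ^ p) ρ1 * matFun (fun x => x ^ q) (Φ ρ2)) :=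
          core_lb hp hq hpq h1 (channel_density hΦ h2) _ hm0 hma
      _ ≤ traceAbs (matFun (fun x => x ^ p) ρ1 * matFun (fun x => x ^ q) (Φ ρ2)) :=
          re_trace_le_traceAbs _
  · -- min attained for traceAbs
    refine ⟨fun X => X.trace • P, hminchan, ?_⟩
    rw [hm_eq]
    show traceAbs (matFun (fun x => x ^ p) ρ1 * matFun (fun x => x ^ q) (ρ2.trace • P))
      = hρH.eigenvalues i0 ^ p
    rw [h2.2, one_smul, hmatFunP]
    show (matAbs (matFun (fun x => x ^ p) ρ1 * P)).trace.re = hρH.eigenvalues i0 ^ p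
    rw [matAbs_of_posSemidef hXPpsd]
    exact hXPtr
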